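/- Let Γ be a group equipped with a finitely-additive probability measure m that is simultaneously left invariant, right invariant and inverse invariant, and let f : Γ → Sym(n) be a symmetric function with uniform local defect δ_∞ = defect_∞(f). Then for every ε > 0 and every γ ∈ Γ, |{ x ∈ [n] : w(x →γ→ f(γ)(x)) > 1 − ε }| ≥ (1 − δ_∞/ε)·n. -/
import Mathlib


open Finset

/-- Extend a permutation of `Fin n` to a partial function `ℕ → Option ℕ`
(`none` playing the role of the dummy symbol `⋆`). -/
def permExt {n : ℕ} (σ : Equiv.Perm (Fin n)) : ℕ → Option ℕ :=
  fun x => if h : x < n then some ((σ ⟨x, h⟩ : Fin n) : ℕ) else none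

/-- The (extended) normalized Hamming distance between permutations of possibly
different sizes.  For `n = N` it is `|{x : σ x ≠ τ x}| / n`; for `n ≤ N` it is
`(|{x ∈ [n] : σ x ≠ τ x}| + (N - n)) / N`. -/
noncomputable def dH {n N : ℕ} (σ : Equiv.Perm (Fin n)) (τ : Equiv.Perm (Fin N)) : ℝ :=
  (((Finset.range (max n N)).filter fun x => permExt σ x ≠ permExt τ x).card : ℝ)
    / ((max n N : ℕ) : ℝ)

/-- The uniform local defect of a map into a symmetric group. -/
noncomputable def defectInfty {Γ : Type*} [Group Γ] {n : ℕ}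
    (f : Γ → Equiv.Perm (Fin n)) : ℝ :=
  ⨆ p : Γ × Γ, dH (f (p.1 * p.2)) (f p.1 * f p.2)

/-- The uniform distance between two maps into (possibly different) symmetric groups. -/
noncomputable def dInfty {Γ : Type*} {n N : ℕ}
    (f : Γ → Equiv.Perm (Fin n)) (h : Γ → Equiv.Perm (Fin N)) : ℝ :=
  ⨆ γ : Γ, dH (f γ) (h γ)

/-- A finitely-additive probability measure on (the power set of) `Γ`. -/
def IsFinAddProb {Γ : Type*} (m : Set Γ → ℝ) : Prop :=
  (∀ A : Set Γ, 0 ≤ m A ∧ m A ≤ 1) ∧ m Set.univ = 1 ∧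
    ∀ A B : Set Γ, Disjoint A B → m (A ∪ B) = m A + m B

/-- Left invariance of a finitely-additive measure. -/
def LeftInvariant {Γ : Type*} [Group Γ] (m : Set Γ → ℝ) : Prop :=
  ∀ (γ : Γ) (A : Set Γ), m ((fun a => γ * a) '' A) = m A

/-- Right invariance of a finitely-additive measure. -/
def RightInvariant {Γ : Type*} [Group Γ] (m : Set Γ → ℝ) : Prop :=
  ∀ (γ : Γ) (A : Set Γ), m ((fun a => a * γ) '' A) = m A

/-- Inverse invariance of a finitely-additive measure. -/
def InvInvariant {Γ : Type*} [Group Γ] (m : Set Γ → ℝ) : Prop :=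
  ∀ A : Set Γ, m A⁻¹ = m A

/-- A discrete group is amenable if it admits a left-invariant finitely-additive
probability measure. -/
def IsAmenable (Γ : Type*) [Group Γ] : Prop :=
  ∃ m : Set Γ → ℝ, IsFinAddProb m ∧ LeftInvariant m

/-- A function between groups is symmetric if it sends `1 ↦ 1` and respects inverses. -/
def IsSymmetricMap {Γ G : Type*} [Group Γ] [Group G] (f : Γ → G) : Prop :=
  f 1 = 1 ∧ ∀ γ : Γ, f γ⁻¹ = (f γ)⁻¹

/-- The weight `w(x →γ→ y)` : the measure of the set of supporters
`T(x →γ→ y) = { t : f(t)(f(t⁻¹γ)(x)) = y }`. -/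
def weight {Γ : Type*} [Group Γ] {n : ℕ} (m : Set Γ → ℝ)
    (f : Γ → Equiv.Perm (Fin n)) (x : Fin n) (γ : Γ) (y : Fin n) : ℝ :=
  m { t : Γ | f t (f (t⁻¹ * γ) x) = y }

lemma dH_nonneg {n N : ℕ} (σ : Equiv.Perm (Fin n)) (τ : Equiv.Perm (Fin N)) :
    0 ≤ dH σ τ := by
  unfold dH; positivity

lemma dH_le_one {n N : ℕ} (σ : Equiv.Perm (Fin n)) (τ : Equiv.Perm (Fin N)) :
    dH σ τ ≤ 1 := by
  unfold dH
  rcases Nat.eq_zero_or_pos (max n N) with h | h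
  · rw [h]; simp
  · rw [div_le_one (by exact_mod_cast h)]
    exact_mod_cast (Finset.card_filter_le _ _).trans (by simp)

lemma dH_le_defect {Γ : Type*} [Group Γ] {n : ℕ} (f : Γ → Equiv.Perm (Fin n))
    (γ₁ γ₂ : Γ) : dH (f (γ₁ * γ₂)) (f γ₁ * f γ₂) ≤ defectInfty f := by
  exact le_ciSup (f := fun p : Γ × Γ => dH (f (p.1 * p.2)) (f p.1 * f p.2))
    ⟨1, by rintro x ⟨p, rfl⟩; exact dH_le_one _ _⟩ (γ₁, γ₂)

lemma defect_nonneg {Γ : Type*} [Group Γ] {n : ℕ} (f : Γ → Equiv.Perm (Fin n)) :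
    0 ≤ defectInfty f :=
  (dH_nonneg _ _).trans (dH_le_defect f 1 1)

lemma dH_card {n : ℕ} (σ τ : Equiv.Perm (Fin n)) :
    ((Finset.univ.filter fun x : Fin n => σ x ≠ τ x).card : ℝ) = dH σ τ * n := by
  unfold dH
  rw [max_self]
  rcases Nat.eq_zero_or_pos n with h | h
  · subst h; simp
  have hcard : ((Finset.range n).filter fun x => permExt σ x ≠ permExt τ x)
      = (Finset.univ.filter fun x : Fin n => σ x ≠ τ x).map
          ⟨Fin.val, Fin.val_injective⟩ := by
    ext x
    simp only [Finset.mem_filter, Finset.mem_range, Finset.mem_map, Finset.mem_univ,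
      true_and, Function.Embedding.coeFn_mk]
    constructor
    · rintro ⟨hx, hne⟩
      refine ⟨⟨x, hx⟩, ?_, rfl⟩
      simpa [permExt, hx, Fin.val_eq_val] using hne
    · rintro ⟨y, hy, rfl⟩
      exact ⟨y.2, by simpa [permExt, y.2, Fin.val_eq_val] using hy⟩
  rw [hcard, Finset.card_map]
  field_simp

lemma m_empty {Γ : Type*} {m : Set Γ → ℝ} (hm : IsFinAddProb m) : m ∅ = 0 := by
  have := hm.2.2 ∅ ∅ (by simp)
  simp only [Set.union_empty] at this
  linarith

lemma finadd_sum {Γ : Type*} {m : Set Γ → ℝ} (hm : IsFinAddProb m) {ι : Type*}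
    [DecidableEq ι] (s : Finset ι) (B : ι → Set Γ)
    (hd : ∀ i ∈ s, ∀ j ∈ s, i ≠ j → Disjoint (B i) (B j)) :
    m (⋃ i ∈ s, B i) = ∑ i ∈ s, m (B i) := by
  induction s using Finset.induction with
  | empty => simpa using m_empty hm
  | @insert a s' ha ih =>
    rw [Finset.set_biUnion_insert, Finset.sum_insert ha,
      hm.2.2 _ _ (by
        rw [Set.disjoint_iUnion_right]
        intro i
        rw [Set.disjoint_iUnion_right]
        intro hi
        exact hd a (Finset.mem_insert_self a s') i (Finset.mem_insert_of_mem hi)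
          (by rintro rfl; exact ha hi)),
      ih (fun i hi j hj hij =>
        hd i (Finset.mem_insert_of_mem hi) j (Finset.mem_insert_of_mem hj) hij)]

open scoped Classical in
lemma sum_measure_le {Γ : Type*} {m : Set Γ → ℝ} (hm : IsFinAddProb m)
    {n : ℕ} (A : Fin n → Set Γ) (C : ℝ)
    (hcount : ∀ t : Γ, (((Finset.univ : Finset (Fin n)).filter
        (fun x => t ∈ A x)).card : ℝ) ≤ C) :
    ∑ x : Fin n, m (A x) ≤ C := by
  classical
  set pat : Γ → Finset (Fin n) := fun t => Finset.univ.filter (fun x => t ∈ A x)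
    with hpat
  set G : Finset (Fin n) → Set Γ := fun S => {t | pat t = S} with hG
  have hdisj : ∀ S ∈ (Finset.univ : Finset (Finset (Fin n))),
      ∀ S' ∈ (Finset.univ : Finset (Finset (Fin n))), S ≠ S' →
        Disjoint (G S) (G S') := by
    intro S _ S' _ hne
    rw [Set.disjoint_left]
    rintro t ht ht'
    exact hne (ht.symm.trans ht')
  have hAx : ∀ x : Fin n, m (A x) =
      ∑ S ∈ Finset.univ.filter (fun S : Finset (Fin n) => x ∈ S), m (G S) := by
    intro x
    have : A x = ⋃ S ∈ Finset.univ.filter (fun S : Finset (Fin n) => x ∈ S), G S := by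
      ext t
      simp only [Set.mem_iUnion, Finset.mem_filter, Finset.mem_univ, true_and, hG,
        Set.mem_setOf_eq]
      constructor
      · intro ht
        exact ⟨pat t, by simp [hpat, ht], rfl⟩
      · rintro ⟨S, hxS, rfl⟩
        have : x ∈ pat t := hxS
        simpa [hpat] using this
    rw [this, finadd_sum hm _ G (fun i hi j hj hij =>
      hdisj i (Finset.mem_univ i) j (Finset.mem_univ j) hij)]
  have htot : ∑ S : Finset (Fin n), m (G S) = 1 := by
    rw [← finadd_sum hm Finset.univ G hdisj]
    have : (⋃ S ∈ (Finset.univ : Finset (Finset (Fin n))), G S) = Set.univ := by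
      ext t
      simp only [Set.mem_iUnion, Set.mem_univ, iff_true, hG, Set.mem_setOf_eq]
      exact ⟨pat t, Finset.mem_univ _, rfl⟩
    rw [this, hm.2.1]
  calc ∑ x : Fin n, m (A x)
      = ∑ x : Fin n, ∑ S ∈ Finset.univ.filter (fun S : Finset (Fin n) => x ∈ S),
          m (G S) := Finset.sum_congr rfl (fun x _ => hAx x)
    _ = ∑ S : Finset (Fin n), ∑ x : Fin n, if x ∈ S then m (G S) else 0 := by
        simp_rw [Finset.sum_filter]
        exact Finset.sum_comm
    _ = ∑ S : Finset (Fin n), (S.card : ℝ) * m (G S) := by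
        refine Finset.sum_congr rfl (fun S _ => ?_)
        rw [← Finset.sum_filter, Finset.sum_const, Finset.filter_mem_eq_inter,
          Finset.univ_inter, nsmul_eq_mul]
    _ ≤ ∑ S : Finset (Fin n), C * m (G S) := by
        refine Finset.sum_le_sum (fun S _ => ?_)
        rcases Set.eq_empty_or_nonempty (G S) with hS | ⟨t, ht⟩
        · rw [hS, m_empty hm, mul_zero, mul_zero]
        · have hcS : ((S.card : ℝ)) ≤ C := by
            have : pat t = S := ht
            simpa [hpat, ← this] using hcount t
          exact mul_le_mul_of_nonneg_right hcS ((hm.1 _).1)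
    _ = C := by rw [← Finset.mul_sum, htot, mul_one]


/-- for every `γ`, at least a `(1 - δ_∞/ε)`-fraction of the points `x`
carry an edge `x →γ→ f(γ)(x)` of weight `> 1 - ε`. -/
theorem statement16 {Γ : Type*} [Group Γ] (m : Set Γ → ℝ)
    (hm : IsFinAddProb m) (hml : LeftInvariant m) (hmr : RightInvariant m)
    (hmi : InvInvariant m)
    {n : ℕ} (f : Γ → Equiv.Perm (Fin n)) (hf : IsSymmetricMap f) :
    ∀ ε : ℝ, 0 < ε → ∀ γ : Γ,
      (1 - defectInfty f / ε) * n ≤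
        (({ x : Fin n | 1 - ε < weight m f x γ (f γ x) }.ncard : ℝ)) := by
  intro ε hε γ
  set δ := defectInfty f with hδ
  set A : Fin n → Set Γ := fun x => {t : Γ | f t (f (t⁻¹ * γ) x) ≠ f γ x} with hA
  have hcount : ∀ t : Γ, (((Finset.univ : Finset (Fin n)).filter
      (fun x => t ∈ A x)).card : ℝ) ≤ δ * n := by
    intro t
    have h1 := dH_le_defect f t (t⁻¹ * γ)
    rw [mul_inv_cancel_left] at h1
    have h2 := dH_card (f γ) (f t * f (t⁻¹ * γ))
    have heq : ((Finset.univ : Finset (Fin n)).filter (fun x => t ∈ A x))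
        = (Finset.univ.filter fun x : Fin n => (f γ) x ≠ (f t * f (t⁻¹ * γ)) x) := by
      apply Finset.filter_congr
      intro x _
      simp only [hA, Set.mem_setOf_eq, Equiv.Perm.mul_apply, ne_comm]
    rw [heq, h2]
    exact mul_le_mul_of_nonneg_right h1 (Nat.cast_nonneg n)
  have hsum : ∑ x : Fin n, m (A x) ≤ δ * n := sum_measure_le hm A _
    (fun t => by convert hcount t using 4)
  -- bad and good sets
  set p : Fin n → Prop := fun x => 1 - ε < weight m f x γ (f γ x) with hp
  set Bad : Finset (Fin n) := Finset.univ.filter (fun x => ¬ p x) with hBad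
  have hbadA : ∀ x ∈ Bad, ε ≤ m (A x) := by
    intro x hx
    have hxw : ¬ (1 - ε < weight m f x γ (f γ x)) := (Finset.mem_filter.mp hx).2
    push_neg at hxw
    have hdis : Disjoint { t : Γ | f t (f (t⁻¹ * γ) x) = f γ x } (A x) := by
      rw [Set.disjoint_left]
      intro t ht ht'
      exact ht' ht
    have hun : { t : Γ | f t (f (t⁻¹ * γ) x) = f γ x } ∪ A x = Set.univ := by
      ext t
      simp only [Set.mem_union, hA, Set.mem_setOf_eq, Set.mem_univ, iff_true]
      exact em _
    have := hm.2.2 _ _ hdis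
    rw [hun, hm.2.1] at this
    have hw : weight m f x γ (f γ x) = m { t : Γ | f t (f (t⁻¹ * γ) x) = f γ x } := rfl
    rw [hw] at hxw
    linarith
  have hBadcard : ε * (Bad.card : ℝ) ≤ δ * n := by
    have h1 : ∑ x ∈ Bad, (ε : ℝ) ≤ ∑ x ∈ Bad, m (A x) := Finset.sum_le_sum hbadA
    have h2 : ∑ x ∈ Bad, m (A x) ≤ ∑ x : Fin n, m (A x) :=
      Finset.sum_le_sum_of_subset_of_nonneg (Finset.subset_univ Bad)
        (fun x _ _ => (hm.1 _).1)
    rw [Finset.sum_const, nsmul_eq_mul] at h1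
    calc ε * (Bad.card : ℝ) = (Bad.card : ℝ) * ε := mul_comm _ _
      _ ≤ ∑ x : Fin n, m (A x) := le_trans h1 h2
      _ ≤ δ * n := hsum
  -- translate ncard
  have hgood : ({ x : Fin n | p x }.ncard : ℝ)
      = ((Finset.univ.filter p).card : ℝ) := by
    have hset : { x : Fin n | p x } = ↑(Finset.univ.filter p) := by
      ext x; simp
    rw [hset, Set.ncard_coe_finset]
  have hsplit : (Finset.univ.filter p).card + Bad.card = n := by
    rw [hBad, Finset.card_filter_add_card_filter_not, Finset.card_univ,
      Fintype.card_fin]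
  have hBadle : (Bad.card : ℝ) ≤ δ * n / ε := by
    rw [le_div_iff₀ hε]
    linarith [hBadcard]
  have hcast : ((Finset.univ.filter p).card : ℝ) + (Bad.card : ℝ) = (n : ℝ) := by
    exact_mod_cast hsplit
  rw [hgood]
  have hre : δ / ε * (n : ℝ) = δ * n / ε := by ring
  nlinarith [hBadle, hcast]
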